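/- Intrinsic description of the partial ordering on the valuative tree at infinity (equivalence of conditions (ii) and (iii) of Proposition 9.15). Let K be an algebraically closed field of characteristic zero and let v, w be normalized semivaluations on R = K[z₁,z₂] centered at infinity. Then v(φ) ≤ w(φ) for every polynomial φ ∈ R if and only if v(|𝔐|) ≤ w(|𝔐|) for every free linear system 𝔐 on 𝔸². -/

import Mathlib

/-- A normalized semivaluation on `R = K[z₁,z₂]` centered at infinity: a function
`v : R → ℝ ∪ {+∞}` with `v(φψ) = v(φ)+v(ψ)`, `v(φ+ψ) ≥ min(v(φ),v(ψ))`, `v ≡ 0` on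
`K^×`, `v(0) = +∞` and `min(v(z₁), v(z₂)) = −1`. -/
def IsSemivalAtInfinity {K : Type*} [Field K] (v : MvPolynomial (Fin 2) K → EReal) : Prop :=
  (∀ φ, v φ ≠ ⊥) ∧
  (∀ φ ψ, v (φ * ψ) = v φ + v ψ) ∧
  (∀ φ ψ, min (v φ) (v ψ) ≤ v (φ + ψ)) ∧
  (∀ c : K, c ≠ 0 → v (MvPolynomial.C c) = 0) ∧
  v 0 = ⊤ ∧
  min (v (MvPolynomial.X 0)) (v (MvPolynomial.X 1)) = -1

private lemma nsmul_neg_one_ereal (m : ℕ) : m • (-1 : EReal) = ((-(m:ℝ) : ℝ) : EReal) := by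
  induction m with
  | zero => simp
  | succ n ih =>
    rw [succ_nsmul, ih]
    have h1 : (-1 : EReal) = ((-1 : ℝ) : EReal) := by rw [EReal.coe_neg, EReal.coe_one]
    rw [h1, ← EReal.coe_add, EReal.coe_eq_coe_iff]
    push_cast; ring

private lemma semival_one {K : Type*} [Field K] {u : MvPolynomial (Fin 2) K → EReal}
    (hu : IsSemivalAtInfinity u) : u 1 = 0 := by
  have := hu.2.2.2.1 1 one_ne_zero
  rwa [map_one] at this

private lemma semival_pow {K : Type*} [Field K] {u : MvPolynomial (Fin 2) K → EReal}
    (hu : IsSemivalAtInfinity u) (p : MvPolynomial (Fin 2) K) (m : ℕ) :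
    u (p ^ m) = m • u p := by
  induction m with
  | zero => rw [pow_zero, zero_smul, semival_one hu]
  | succ n ih => rw [pow_succ, hu.2.1, ih, succ_nsmul]

private lemma semival_gen_min {K : Type*} [Field K] {u : MvPolynomial (Fin 2) K → EReal}
    (hu : IsSemivalAtInfinity u) (φ : MvPolynomial (Fin 2) K) (m : ℕ) :
    min (u (φ * MvPolynomial.X 0 ^ m)) (u (φ * MvPolynomial.X 1 ^ m))
      = u φ + ((-(m:ℝ) : ℝ) : EReal) := by
  rw [hu.2.1, hu.2.1, semival_pow hu, semival_pow hu, min_add_add_left]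
  congr 1
  have hmin := hu.2.2.2.2.2
  rcases le_total (u (MvPolynomial.X 0)) (u (MvPolynomial.X 1)) with h | h
  · rw [min_eq_left h] at hmin
    rw [min_eq_left (nsmul_le_nsmul_right h m), hmin, nsmul_neg_one_ereal]
  · rw [min_eq_right h] at hmin
    rw [min_eq_right (nsmul_le_nsmul_right h m), hmin, nsmul_neg_one_ereal]

/-- **Intrinsic description of the partial ordering on the valuative tree at infinity.**
For normalized semivaluations `v, w` centered at infinity, `v(φ) ≤ w(φ)` for all
polynomials `φ` if and only if `v(|𝔐|) ≤ w(|𝔐|)` for every free linear system `𝔐`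
on `𝔸²` (a nonzero finite-dimensional subspace of `R` with empty base locus), where
`v(|𝔐|) = inf {v(φ) : φ ∈ 𝔐, φ ≠ 0}`. -/
theorem valuative_tree_at_infinity_order_intrinsic {K : Type*} [Field K] [IsAlgClosed K]
    [CharZero K]
    (v w : MvPolynomial (Fin 2) K → EReal)
    (hv : IsSemivalAtInfinity v) (hw : IsSemivalAtInfinity w) :
    (∀ φ : MvPolynomial (Fin 2) K, v φ ≤ w φ) ↔
      (∀ M : Submodule K (MvPolynomial (Fin 2) K), M ≠ ⊥ → FiniteDimensional K M →
        (∀ ξ : Fin 2 → K, ∃ φ ∈ M, MvPolynomial.eval ξ φ ≠ 0) →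
        sInf (v '' {φ : MvPolynomial (Fin 2) K | φ ∈ M ∧ φ ≠ 0}) ≤
          sInf (w '' {φ : MvPolynomial (Fin 2) K | φ ∈ M ∧ φ ≠ 0})) := by
  constructor
  · intro h M _ _ _
    refine le_sInf ?_
    rintro b ⟨φ, hφ, rfl⟩
    exact le_trans (sInf_le ⟨φ, hφ, rfl⟩) (h φ)
  · intro h φ
    by_contra hlt
    push_neg at hlt
    have hφ0 : φ ≠ 0 := by
      rintro rfl
      rw [hv.2.2.2.2.1, hw.2.2.2.2.1] at hlt
      exact lt_irrefl _ hlt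
    -- w φ is a real number
    have hbot : w φ ≠ ⊥ := hw.1 φ
    have htop : w φ ≠ ⊤ := hlt.ne_top
    obtain ⟨r, hr⟩ : ∃ r : ℝ, w φ = (r : EReal) := by
      cases hwφ : w φ with
      | bot => exact absurd hwφ hbot
      | top => exact absurd hwφ htop
      | coe r => exact ⟨r, rfl⟩
    obtain ⟨m, hm⟩ := exists_nat_gt r
    set g1 : MvPolynomial (Fin 2) K := φ * MvPolynomial.X 0 ^ m with hg1
    set g2 : MvPolynomial (Fin 2) K := φ * MvPolynomial.X 1 ^ m with hg2
    set M : Submodule K (MvPolynomial (Fin 2) K) :=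
      Submodule.span K {g1, g2, (1 : MvPolynomial (Fin 2) K)} with hM
    have h1M : (1 : MvPolynomial (Fin 2) K) ∈ M :=
      Submodule.subset_span (by simp)
    have hg1M : g1 ∈ M := Submodule.subset_span (by simp)
    have hg2M : g2 ∈ M := Submodule.subset_span (by simp)
    have hg1ne : g1 ≠ 0 := mul_ne_zero hφ0 (pow_ne_zero _ (MvPolynomial.X_ne_zero _))
    have hg2ne : g2 ≠ 0 := mul_ne_zero hφ0 (pow_ne_zero _ (MvPolynomial.X_ne_zero _))
    have key := h M
      (Submodule.ne_bot_iff M |>.mpr ⟨1, h1M, one_ne_zero⟩)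
      (FiniteDimensional.span_of_finite K (Set.toFinite _))
      (fun ξ => ⟨1, h1M, by simp⟩)
    -- upper bound for the w-infimum
    have hub : sInf (w '' {ψ : MvPolynomial (Fin 2) K | ψ ∈ M ∧ ψ ≠ 0})
        ≤ w φ + ((-(m:ℝ) : ℝ) : EReal) := by
      rw [← semival_gen_min hw φ m]
      exact le_min (sInf_le ⟨g1, ⟨hg1M, hg1ne⟩, rfl⟩) (sInf_le ⟨g2, ⟨hg2M, hg2ne⟩, rfl⟩)
    -- lower bound for the v-infimum
    have hlbM : ∀ ψ ∈ M, min (min (v g1) (v g2)) (v 1) ≤ v ψ := by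
      intro ψ hψ
      induction hψ using Submodule.span_induction with
      | mem x hx =>
        rcases hx with rfl | rfl | rfl
        · exact le_trans (min_le_left _ _) (min_le_left _ _)
        · exact le_trans (min_le_left _ _) (min_le_right _ _)
        · exact min_le_right _ _
      | zero => rw [hv.2.2.2.2.1]; exact le_top
      | add x y hx hy ihx ihy => exact le_trans (le_min ihx ihy) (hv.2.2.1 x y)
      | smul a x hx ihx =>
        by_cases ha : a = 0
        · rw [ha, zero_smul, hv.2.2.2.2.1]; exact le_top
        · rw [MvPolynomial.smul_eq_C_mul, hv.2.1 (MvPolynomial.C a) x,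
            hv.2.2.2.1 a ha, zero_add]
          exact ihx
    have hlb : min (v φ + ((-(m:ℝ) : ℝ) : EReal)) 0
        ≤ sInf (v '' {ψ : MvPolynomial (Fin 2) K | ψ ∈ M ∧ ψ ≠ 0}) := by
      refine le_sInf ?_
      rintro b ⟨ψ, ⟨hψM, -⟩, rfl⟩
      have := hlbM ψ hψM
      rwa [semival_one hv, semival_gen_min hv φ m] at this
    have hchain : min (v φ + ((-(m:ℝ) : ℝ) : EReal)) 0 ≤ ((r - m : ℝ) : EReal) := by
      have : w φ + ((-(m:ℝ) : ℝ) : EReal) = ((r - m : ℝ) : EReal) := by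
        rw [hr, ← EReal.coe_add]; ring_nf
      exact le_trans hlb (le_trans key (this ▸ hub))
    have hrm_neg : ((r - m : ℝ) : EReal) < 0 := by
      rw [← EReal.coe_zero, EReal.coe_lt_coe_iff]
      linarith
    rcases le_total (v φ + ((-(m:ℝ) : ℝ) : EReal)) 0 with hcase | hcase
    · rw [min_eq_left hcase] at hchain
      -- cancel the real constant
      have : v φ ≤ w φ := by
        have h2 := add_le_add_left hchain (((m:ℝ) : ℝ) : EReal)
        rw [add_assoc, ← EReal.coe_add, neg_add_cancel, EReal.coe_zero, add_zero,
          ← EReal.coe_add] at h2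
        have h3 : ((r - m + m : ℝ) : EReal) = (r : EReal) := by norm_num
        rwa [h3, ← hr] at h2
      exact absurd this (not_le.mpr hlt)
    · rw [min_eq_right hcase] at hchain
      exact absurd (lt_of_le_of_lt hchain hrm_neg) (lt_irrefl 0)
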